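/- Let M(u,v) = u^m v^n / μ(u,v)^ℓ on Σ* = [0,1]² \ {(0,0)}, where μ(u,v) = 4uv + 2βu³ + 2γv³ + ν(u,v) with β, γ > 0, ν = O(u²v + uv² + (u+v)⁴), and μ > 0 on Σ*. Then ∫_{Σ} |M|^p μ < ∞ if and only if m + n + min{m,n} > 3ℓ − 6/p. -/

import Mathlib

open MeasureTheory Set Real
open scoped ENNReal NNReal
set_option maxHeartbeats 1000000

noncomputable def phi (x y : ℝ) : ℝ := x*y + x^3 + y^3

lemma phi_pos {x y : ℝ} (hx : 0 < x) (hy : 0 < y) : 0 < phi x y := by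
  unfold phi; positivity

lemma pow_rpow (x : ℝ) (hx : 0 ≤ x) (n : ℕ) (t : ℝ) : ((x^n : ℝ)) ^ t = x ^ ((n:ℝ)*t) := by
  rw [← Real.rpow_natCast x n, ← Real.rpow_mul hx]

/-- if 0 < u ≤ v then v^(-s) ≤ u^(-s) for 0 ≤ s -/
lemma rpow_neg_mono {u v s : ℝ} (hu : 0 < u) (huv : u ≤ v) (hs : 0 ≤ s) :
    v ^ (-s) ≤ u ^ (-s) :=
  Real.rpow_le_rpow_of_nonpos hu huv (neg_nonpos.mpr hs)

section bounds
variable {a b s x y : ℝ}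

lemma realB1 (hx : 0 < x) (hy : 0 < y) (hs : 0 ≤ s) :
    x^a * y^b * (phi x y) ^ (-s) ≤ x^(a-3*s) * y^b := by
  have h1 : (x^3 : ℝ) ≤ phi x y := by unfold phi; nlinarith [mul_pos hx hy, pow_pos hx 3, pow_pos hy 3]
  have h2 : (phi x y) ^ (-s) ≤ (x^3:ℝ) ^ (-s) := rpow_neg_mono (by positivity) h1 hs
  have h3 : ((x^3:ℝ)) ^ (-s) = x ^ (-(3*s)) := by rw [pow_rpow x hx.le 3]; norm_num
  calc x^a * y^b * (phi x y)^(-s) ≤ x^a * y^b * (x ^ (-(3*s))) := by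
        rw [← h3]; exact mul_le_mul_of_nonneg_left h2 (by positivity)
    _ = x^(a-3*s) * y^b := by rw [mul_right_comm, ← Real.rpow_add hx]; ring_nf

lemma realB2 (hx : 0 < x) (hy : 0 < y) (hs : 0 ≤ s) :
    x^a * y^b * (phi x y) ^ (-s) ≤ x^(a-s) * y^(b-s) := by
  have h1 : x*y ≤ phi x y := by unfold phi; nlinarith [mul_pos hx hy, pow_pos hx 3, pow_pos hy 3]
  have h2 : (phi x y) ^ (-s) ≤ (x*y) ^ (-s) := rpow_neg_mono (by positivity) h1 hs
  have h3 : (x*y) ^ (-s) = x ^ (-s) * y ^ (-s) := Real.mul_rpow hx.le hy.le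
  calc x^a * y^b * (phi x y)^(-s) ≤ x^a * y^b * (x^(-s) * y^(-s)) := by
        rw [← h3]; exact mul_le_mul_of_nonneg_left h2 (by positivity)
    _ = (x^a * x^(-s)) * (y^b * y^(-s)) := by ring
    _ = x^(a-s) * y^(b-s) := by
        rw [← Real.rpow_add hx, ← Real.rpow_add hy]; ring_nf

lemma realB3 (hx : 0 < x) (hy : 0 < y) (hs : 0 ≤ s) :
    x^a * y^b * (phi x y) ^ (-s) ≤ x^a * y^(b-3*s) := by
  have h1 : (y^3 : ℝ) ≤ phi x y := by unfold phi; nlinarith [mul_pos hx hy, pow_pos hx 3, pow_pos hy 3]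
  have h2 : (phi x y) ^ (-s) ≤ (y^3:ℝ) ^ (-s) := rpow_neg_mono (by positivity) h1 hs
  have h3 : ((y^3:ℝ)) ^ (-s) = y ^ (-(3*s)) := by rw [pow_rpow y hy.le 3]; norm_num
  calc x^a * y^b * (phi x y)^(-s) ≤ x^a * (y^b * y ^ (-(3*s))) := by
        rw [mul_assoc]
        refine mul_le_mul_of_nonneg_left ?_ (by positivity)
        rw [← h3]; exact mul_le_mul_of_nonneg_left h2 (by positivity)
    _ = x^a * y^(b-3*s) := by rw [← Real.rpow_add hy]; ring_nf

/-- trade: if x^2 ≤ y then y^t ≤ y^(t+ε) * x^(-2ε) for ε ≥ 0 -/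
lemma trade1 (hx : 0 < x) (hy : 0 < y) {ε t : ℝ} (hε : 0 ≤ ε) (h : x^2 ≤ y) :
    y ^ t ≤ x ^ (-(2*ε)) * y ^ (t+ε) := by
  have h2 : y ^ (-ε) ≤ ((x^2:ℝ)) ^ (-ε) := rpow_neg_mono (by positivity) h hε
  have h3 : ((x^2:ℝ)) ^ (-ε) = x ^ (-(2*ε)) := by rw [pow_rpow x hx.le 2]; norm_num
  calc y ^ t = y ^ (t+ε) * y ^ (-ε) := by rw [← Real.rpow_add hy]; ring_nf
    _ ≤ y ^ (t+ε) * x ^ (-(2*ε)) := by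
        rw [← h3]; exact mul_le_mul_of_nonneg_left h2 (by positivity)
    _ = x ^ (-(2*ε)) * y ^ (t+ε) := by ring

/-- trade: if y^2 ≤ x then x^t ≤ x^(t+ε) * y^(-2ε) for ε ≥ 0 -/
lemma trade2 (hx : 0 < x) (hy : 0 < y) {ε t : ℝ} (hε : 0 ≤ ε) (h : y^2 ≤ x) :
    x ^ t ≤ y ^ (-(2*ε)) * x ^ (t+ε) := trade1 hy hx hε h

end bounds

lemma meas1 (e : ℝ) : Measurable fun x : ℝ => ENNReal.ofReal (x ^ e) :=
  (measurable_id.pow_const e).ennreal_ofReal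

lemma lint_Ioc_rpow {t c : ℝ} (ht : -1 < t) (hc : 0 < c) :
    ∫⁻ y in Ioc (0:ℝ) c, ENNReal.ofReal (y ^ t) = ENNReal.ofReal (c ^ (t+1) / (t+1)) := by
  have hint : IntervalIntegrable (fun y : ℝ => y ^ t) volume 0 c :=
    intervalIntegral.intervalIntegrable_rpow' ht
  have hInt : IntegrableOn (fun y : ℝ => y ^ t) (Ioc 0 c) volume := by
    simpa [intervalIntegrable_iff, uIoc_of_le hc.le] using hint
  rw [← ofReal_integral_eq_lintegral_ofReal hInt]
  · congr 1
    have := integral_rpow (a := 0) (b := c) (Or.inl ht)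
    rw [Real.zero_rpow (by linarith : t + 1 ≠ 0)] at this
    rw [← intervalIntegral.integral_of_le hc.le] at *
    rw [this]; ring
  · filter_upwards [ae_restrict_mem measurableSet_Ioc] with y hy
    exact Real.rpow_nonneg hy.1.le _

lemma lint_Ioc_rpow_neg {t c d : ℝ} (ht : t < -1) (hc : 0 < c) (hcd : c ≤ d) :
    ∫⁻ y in Ioc c d, ENNReal.ofReal (y ^ t) ≤ ENNReal.ofReal (c ^ (t+1) / (-t-1)) := by
  have hInt : IntegrableOn (fun y : ℝ => y ^ t) (Ioc c d) volume := by
    have : IntervalIntegrable (fun y : ℝ => y ^ t) volume c d := by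
      apply intervalIntegral.intervalIntegrable_rpow
      right
      rw [uIcc_of_le hcd]
      intro h0; exact absurd (h0.1) (by linarith)
    simpa [intervalIntegrable_iff, uIoc_of_le hcd] using this
  rw [← ofReal_integral_eq_lintegral_ofReal hInt]
  · apply ENNReal.ofReal_le_ofReal
    have h1 : ∫ y in Ioc c d, y ^ t = (d ^ (t+1) - c ^ (t+1))/(t+1) := by
      rw [← intervalIntegral.integral_of_le hcd]
      exact integral_rpow (Or.inr ⟨by intro h; linarith, by
        rw [uIcc_of_le hcd]; intro h0; exact absurd h0.1 (by linarith)⟩)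
    rw [h1]
    have h2 : (0:ℝ) < -t-1 := by linarith
    have h3 : (0:ℝ) ≤ d ^ (t+1) := Real.rpow_nonneg (le_trans hc.le hcd) (t+1)
    have h4 : (d ^ (t+1) - c ^ (t+1))/(t+1) = (c^(t+1) - d^(t+1))/(-t-1) := by
      rw [div_eq_div_iff (by linarith : t+1 ≠ 0) (by linarith : -t-1 ≠ 0)]; ring
    rw [h4]
    have : c^(t+1) - d^(t+1) ≤ c^(t+1) := by linarith
    exact div_le_div_of_nonneg_right this h2.le
  · filter_upwards [ae_restrict_mem measurableSet_Ioc] with y hy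
    exact Real.rpow_nonneg (le_trans hc.le hy.1.le) _

lemma lint_Ioo_rpow_top {e : ℝ} (he : e ≤ -1) :
    ∫⁻ x in Ioo (0:ℝ) 1, ENNReal.ofReal (x ^ e) = ⊤ := by
  by_contra h
  have hfin : HasFiniteIntegral (fun x : ℝ => x ^ e) (volume.restrict (Ioo 0 1)) := by
    rw [hasFiniteIntegral_iff_ofReal]
    · exact Ne.lt_top h
    · filter_upwards [ae_restrict_mem measurableSet_Ioo] with x hx
      exact Real.rpow_nonneg hx.1.le _
  have : IntegrableOn (fun x : ℝ => x ^ e) (Ioo 0 1) volume :=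
    ⟨((measurable_id.pow_const e).aestronglyMeasurable), hfin⟩
  rw [intervalIntegral.integrableOn_Ioo_rpow_iff one_pos] at this
  linarith

/-- pieceA: bound over Ioc 0 d with t > -1 -/
lemma pieceA {f : ℝ → ℝ≥0∞} {t c d M : ℝ} (ht : -1 < t) (hc : 0 ≤ c) (hd : 0 < d) (hM : 0 ≤ M)
    (hf : ∀ y ∈ Ioc c d, f y ≤ ENNReal.ofReal (M * y ^ t)) :
    ∫⁻ y in Ioc c d, f y ≤ ENNReal.ofReal (M * (d ^ (t+1) / (t+1))) := by
  calc ∫⁻ y in Ioc c d, f y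
      ≤ ∫⁻ y in Ioc c d, ENNReal.ofReal M * ENNReal.ofReal (y ^ t) := by
        apply setLIntegral_mono ((meas1 t).const_mul _)
        intro y hy
        rw [← ENNReal.ofReal_mul hM]; exact hf y hy
    _ ≤ ∫⁻ y in Ioc (0:ℝ) d, ENNReal.ofReal M * ENNReal.ofReal (y ^ t) :=
        lintegral_mono_set (Ioc_subset_Ioc_left hc)
    _ = ENNReal.ofReal M * ∫⁻ y in Ioc (0:ℝ) d, ENNReal.ofReal (y ^ t) :=
        lintegral_const_mul _ (meas1 t)
    _ = _ := by rw [lint_Ioc_rpow ht hd, ← ENNReal.ofReal_mul hM]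

lemma merge {x : ℝ} (hx : 0 < x) (u v c : ℝ) :
    x ^ u * (x ^ v / c) = (1/c) * x ^ (u+v) := by
  rw [← mul_div_assoc, ← Real.rpow_add hx]; ring

/-- pieceB: bound over Ioc c d with t < -1, 0 < c ≤ d -/
lemma pieceB {f : ℝ → ℝ≥0∞} {t c d M : ℝ} (ht : t < -1) (hc : 0 < c) (hcd : c ≤ d) (hM : 0 ≤ M)
    (hf : ∀ y ∈ Ioc c d, f y ≤ ENNReal.ofReal (M * y ^ t)) :
    ∫⁻ y in Ioc c d, f y ≤ ENNReal.ofReal (M * (c ^ (t+1) / (-t-1))) := by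
  calc ∫⁻ y in Ioc c d, f y
      ≤ ∫⁻ y in Ioc c d, ENNReal.ofReal M * ENNReal.ofReal (y ^ t) := by
        apply setLIntegral_mono ((meas1 t).const_mul _)
        intro y hy
        rw [← ENNReal.ofReal_mul hM]; exact hf y hy
    _ = ENNReal.ofReal M * ∫⁻ y in Ioc c d, ENNReal.ofReal (y ^ t) :=
        lintegral_const_mul _ (meas1 t)
    _ ≤ ENNReal.ofReal M * ENNReal.ofReal (c ^ (t+1) / (-t-1)) := by
        exact mul_le_mul_right (lint_Ioc_rpow_neg ht hc hcd) _
    _ = _ := by rw [← ENNReal.ofReal_mul hM]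
section
variable {a b s : ℝ}

lemma inner_bound (ha : 0 ≤ a) (hb : 0 ≤ b) (hs : 0 < s)
    (h1 : 3*s < a+2*b+3) (h2 : 3*s < 2*a+b+3) :
    ∃ K₁ K₂ K₃ K₄ e₁ e₂ e₃ e₄ : ℝ, 0 ≤ K₁ ∧ 0 ≤ K₂ ∧ 0 ≤ K₃ ∧ 0 ≤ K₄ ∧
      -1 < e₁ ∧ -1 < e₂ ∧ -1 < e₃ ∧ -1 < e₄ ∧
      ∀ x ∈ Ioo (0:ℝ) 1,
        (∫⁻ y in Ioo (0:ℝ) 1, ENNReal.ofReal (x^a * y^b * (phi x y)^(-s)))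
          ≤ ENNReal.ofReal (K₁ * x^e₁) + ENNReal.ofReal (K₂*x^e₂)
            + ENNReal.ofReal (K₃*x^e₃) + ENNReal.ofReal (K₄*x^e₄) := by
  have hub : 0 < a+b+2-2*s := by linarith
  set ε : ℝ := (max 0 (s-b-1) + (a+b+2-2*s))/2 with hεdef
  have hεmax : max 0 (s-b-1) < a+b+2-2*s := by
    rcases max_cases 0 (s-b-1) with ⟨h,_⟩|⟨h,_⟩ <;> rw [h] <;> linarith
  have hε0 : 0 < ε := by
    have := le_max_left 0 (s-b-1); rw [hεdef]; linarith
  have hεlt : ε < a+b+2-2*s := by rw [hεdef]; linarith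
  have ht2 : -1 < b - s + ε := by
    have := le_max_right 0 (s-b-1); rw [hεdef] at *; linarith [hεmax]
  set ε' : ℝ := (max 0 ((b+1-s)/2) + (a+b+2-2*s))/2 with hε'def
  have hε'max : max 0 ((b+1-s)/2) < a+b+2-2*s := by
    rcases max_cases 0 ((b+1-s)/2) with ⟨h,_⟩|⟨h,_⟩ <;> rw [h] <;> linarith
  have hε'0 : 0 < ε' := by
    have := le_max_left 0 ((b+1-s)/2); rw [hε'def]; linarith
  have hε'lt : ε' < a+b+2-2*s := by rw [hε'def]; linarith
  have ht3 : b - s - 2*ε' < -1 := by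
    have := le_max_right 0 ((b+1-s)/2); rw [hε'def] at *; linarith [hε'max]
  -- piece 4 exponent
  obtain ⟨K₄, e₄, t₄, hK₄, he₄, ht₄1, hK₄val⟩ :
      ∃ K₄ e₄ t₄ : ℝ, 0 ≤ K₄ ∧ -1 < e₄ ∧ t₄ ≤ b - 3*s ∧
        ((t₄ < -1 ∧ K₄ = 1/(-t₄-1) ∧ e₄ = a + (t₄+1)/2) ∨
         (t₄ = b-3*s ∧ -1 < t₄ ∧ K₄ = 1/(t₄+1) ∧ e₄ = a)) := by
    by_cases hcase : (-1:ℝ) < b - 3*s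
    · have hpos : (0:ℝ) < b-3*s+1 := by linarith
      exact ⟨1/(b-3*s+1), a, b-3*s, by positivity, by linarith, le_refl _,
        Or.inr ⟨rfl, hcase, rfl, rfl⟩⟩
    · push_neg at hcase
      set δ : ℝ := min 1 ((2*a+b+3-3*s)/2) with hδdef
      have hδ0 : 0 < δ := by
        apply lt_min one_pos; linarith
      have hδ1 : δ ≤ 1 := min_le_left _ _
      have hδ2 : δ ≤ (2*a+b+3-3*s)/2 := min_le_right _ _
      refine ⟨1/(-(b-3*s-δ)-1), a + ((b-3*s-δ)+1)/2, b-3*s-δ, ?_, ?_, by linarith,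
        Or.inl ⟨by linarith, rfl, rfl⟩⟩
      · have : 0 < -(b-3*s-δ)-1 := by linarith
        positivity
      · linarith
  refine ⟨1/(b+1), 1/(b-s+ε+1), 1/(s+2*ε'-b-1), K₄,
    a+2*b+2-3*s, a+b+1-2*s-ε, a+b+1-2*s-ε', e₄,
    by positivity, ?_, ?_, hK₄, by linarith, by linarith, by linarith, he₄, ?_⟩
  · have h : (0:ℝ) < b-s+ε+1 := by linarith
    positivity
  · have h : (0:ℝ) < s+2*ε'-b-1 := by linarith
    positivity
  intro x hx
  obtain ⟨hx0, hx1⟩ := hx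
  set r : ℝ := x ^ ((2:ℝ)⁻¹) with hrdef
  have hr0 : 0 < r := Real.rpow_pos_of_pos hx0 _
  have hr1 : r ≤ 1 := Real.rpow_le_one hx0.le hx1.le (by norm_num)
  have hxr : x ≤ r := by
    nth_rewrite 1 [← Real.rpow_one x]
    exact Real.rpow_le_rpow_of_exponent_ge hx0 hx1.le (by norm_num)
  have hrsq : r^2 = x := by
    rw [hrdef, ← Real.rpow_natCast (x ^ ((2:ℝ)⁻¹)) 2, ← Real.rpow_mul hx0.le]
    norm_num
  have hx20 : 0 < x^2 := by positivity
  have hx2x : x^2 ≤ x := by nlinarith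
  have hcover : Ioo (0:ℝ) 1 ⊆ Ioc 0 (x^2) ∪ (Ioc (x^2) x ∪ (Ioc x r ∪ Ioc r 1)) := by
    intro y hy
    rcases le_or_gt y (x^2) with h|h
    · exact Or.inl ⟨hy.1, h⟩
    rcases le_or_gt y x with h'|h'
    · exact Or.inr (Or.inl ⟨h, h'⟩)
    rcases le_or_gt y r with h''|h''
    · exact Or.inr (Or.inr (Or.inl ⟨h', h''⟩))
    · exact Or.inr (Or.inr (Or.inr ⟨h'', hy.2.le⟩))
  -- piece 1
  have hP1 : (∫⁻ y in Ioc (0:ℝ) (x^2), ENNReal.ofReal (x^a * y^b * (phi x y)^(-s)))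
      ≤ ENNReal.ofReal ((1/(b+1)) * x^(a+2*b+2-3*s)) := by
    have := pieceA (f := fun y => ENNReal.ofReal (x^a * y^b * (phi x y)^(-s)))
      (M := x^(a-3*s)) (by linarith : (-1:ℝ) < b) (le_refl (0:ℝ)) hx20
      (Real.rpow_nonneg hx0.le _) ?_
    · refine this.trans (le_of_eq ?_)
      congr 1
      rw [pow_rpow x hx0.le 2 (b+1), merge hx0,
        show ((2:ℕ):ℝ)*(b+1) = 2*(b+1) from by norm_num,
        show a - 3*s + 2*(b+1) = a+2*b+2-3*s from by ring]
    · intro y hy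
      exact ENNReal.ofReal_le_ofReal (realB1 hx0 hy.1 hs.le)
  -- piece 2
  have hP2 : (∫⁻ y in Ioc (x^2) x, ENNReal.ofReal (x^a * y^b * (phi x y)^(-s)))
      ≤ ENNReal.ofReal ((1/(b-s+ε+1)) * x^(a+b+1-2*s-ε)) := by
    have := pieceA (f := fun y => ENNReal.ofReal (x^a * y^b * (phi x y)^(-s)))
      (M := x^(a-s-2*ε)) ht2 hx20.le hx0 (Real.rpow_nonneg hx0.le _) ?_
    · refine this.trans (le_of_eq ?_)
      congr 1
      rw [merge hx0]
      rw [show a-s-2*ε + (b-s+ε+1) = a+b+1-2*s-ε from by ring]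
    · intro y hy
      have hy0 : 0 < y := lt_trans hx20 hy.1
      apply ENNReal.ofReal_le_ofReal
      calc x^a * y^b * (phi x y)^(-s) ≤ x^(a-s) * y^(b-s) := realB2 hx0 hy0 hs.le
        _ ≤ x^(a-s) * (x^(-(2*ε)) * y^(b-s+ε)) :=
            mul_le_mul_of_nonneg_left (trade1 hx0 hy0 hε0.le hy.1.le)
              (Real.rpow_nonneg hx0.le _)
        _ = (x^(a-s) * x^(-(2*ε))) * y^(b-s+ε) := by ring
        _ = x^(a-s-2*ε) * y^(b-s+ε) := by
            rw [← Real.rpow_add hx0, show a-s + -(2*ε) = a-s-2*ε from by ring]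
  -- piece 3
  have hP3 : (∫⁻ y in Ioc x r, ENNReal.ofReal (x^a * y^b * (phi x y)^(-s)))
      ≤ ENNReal.ofReal ((1/(s+2*ε'-b-1)) * x^(a+b+1-2*s-ε')) := by
    have := pieceB (f := fun y => ENNReal.ofReal (x^a * y^b * (phi x y)^(-s)))
      (M := x^(a-s+ε')) ht3 hx0 hxr (Real.rpow_nonneg hx0.le _) ?_
    · refine this.trans (le_of_eq ?_)
      congr 1
      rw [merge hx0]
      rw [show a-s+ε' + (b-s-2*ε'+1) = a+b+1-2*s-ε' from by ring,
        show -(b-s-2*ε')-1 = s+2*ε'-b-1 from by ring]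
    · intro y hy
      have hy0 : 0 < y := lt_trans hx0 hy.1
      have hy2 : y^2 ≤ x := by nlinarith [hy.2, hrsq, hr0]
      apply ENNReal.ofReal_le_ofReal
      calc x^a * y^b * (phi x y)^(-s) ≤ x^(a-s) * y^(b-s) := realB2 hx0 hy0 hs.le
        _ ≤ (y^(-(2*ε')) * x^(a-s+ε')) * y^(b-s) :=
            mul_le_mul_of_nonneg_right (trade2 hx0 hy0 hε'0.le hy2)
              (Real.rpow_nonneg hy0.le _)
        _ = x^(a-s+ε') * (y^(-(2*ε')) * y^(b-s)) := by ring
        _ = x^(a-s+ε') * y^(b-s-2*ε') := by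
            rw [← Real.rpow_add hy0, show -(2*ε') + (b-s) = b-s-2*ε' from by ring]
  -- piece 4
  have hP4 : (∫⁻ y in Ioc r 1, ENNReal.ofReal (x^a * y^b * (phi x y)^(-s)))
      ≤ ENNReal.ofReal (K₄ * x^e₄) := by
    rcases hK₄val with ⟨ht₄, hK, he⟩ | ⟨ht₄eq, ht₄gt, hK, he⟩
    · have := pieceB (f := fun y => ENNReal.ofReal (x^a * y^b * (phi x y)^(-s)))
        (M := x^a) ht₄ hr0 hr1 (Real.rpow_nonneg hx0.le _) ?_
      · refine this.trans (le_of_eq ?_)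
        congr 1
        have hrpow : r ^ (t₄+1) = x ^ ((2:ℝ)⁻¹ * (t₄+1)) := by
          rw [hrdef, ← Real.rpow_mul hx0.le]
        rw [hrpow, merge hx0, hK, he,
          show a + (2:ℝ)⁻¹ * (t₄+1) = a + (t₄+1)/2 from by ring]
      · intro y hy
        have hy0 : 0 < y := lt_trans hr0 hy.1
        apply ENNReal.ofReal_le_ofReal
        calc x^a * y^b * (phi x y)^(-s) ≤ x^a * y^(b-3*s) := realB3 hx0 hy0 hs.le
          _ ≤ x^a * y^t₄ :=
              mul_le_mul_of_nonneg_left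
                (Real.rpow_le_rpow_of_exponent_ge hy0 hy.2 ht₄1)
                (Real.rpow_nonneg hx0.le _)
    · have := pieceA (f := fun y => ENNReal.ofReal (x^a * y^b * (phi x y)^(-s)))
        (M := x^a) ht₄gt hr0.le one_pos (Real.rpow_nonneg hx0.le _) ?_
      · refine this.trans (le_of_eq ?_)
        congr 1
        rw [Real.one_rpow, hK, he]; ring
      · intro y hy
        have hy0 : 0 < y := lt_trans hr0 hy.1
        apply ENNReal.ofReal_le_ofReal
        rw [ht₄eq]
        exact realB3 hx0 hy0 hs.le
  calc (∫⁻ y in Ioo (0:ℝ) 1, ENNReal.ofReal (x^a * y^b * (phi x y)^(-s)))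
      ≤ ∫⁻ y in Ioc 0 (x^2) ∪ (Ioc (x^2) x ∪ (Ioc x r ∪ Ioc r 1)),
          ENNReal.ofReal (x^a * y^b * (phi x y)^(-s)) := lintegral_mono_set hcover
    _ ≤ (∫⁻ y in Ioc (0:ℝ) (x^2), ENNReal.ofReal (x^a * y^b * (phi x y)^(-s)))
        + ((∫⁻ y in Ioc (x^2) x, ENNReal.ofReal (x^a * y^b * (phi x y)^(-s)))
        + ((∫⁻ y in Ioc x r, ENNReal.ofReal (x^a * y^b * (phi x y)^(-s)))
        + (∫⁻ y in Ioc r 1, ENNReal.ofReal (x^a * y^b * (phi x y)^(-s))))) := by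
        refine (lintegral_union_le _ _ _).trans (add_le_add_right ?_ _)
        refine (lintegral_union_le _ _ _).trans (add_le_add_right ?_ _)
        exact lintegral_union_le _ _ _
    _ ≤ _ := by
        rw [← add_assoc, ← add_assoc]
        exact add_le_add (add_le_add (add_le_add hP1 hP2) hP3) hP4

end

lemma phi_comm (x y : ℝ) : phi x y = phi y x := by unfold phi; ring

lemma phi_meas_y (x : ℝ) : Measurable fun y : ℝ => phi x y := by
  unfold phi; fun_prop

lemma measG (a b s : ℝ) :
    Measurable fun q : ℝ×ℝ => ENNReal.ofReal (q.1^a * q.2^b * (phi q.1 q.2)^(-s)) := by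
  apply Measurable.ennreal_ofReal
  refine Measurable.mul (Measurable.mul ?_ ?_) ?_
  · exact measurable_fst.pow_const a
  · exact measurable_snd.pow_const b
  · refine Measurable.pow_const ?_ (-s)
    unfold phi; fun_prop

lemma measGy (a b s x : ℝ) :
    Measurable fun y : ℝ => ENNReal.ofReal (x^a * y^b * (phi x y)^(-s)) := by
  apply Measurable.ennreal_ofReal
  exact (measurable_const.mul (measurable_id.pow_const b)).mul
    ((phi_meas_y x).pow_const (-s))

lemma iter (F : ℝ×ℝ → ℝ≥0∞) (hF : Measurable F) (S T : Set ℝ) :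
    ∫⁻ q in S ×ˢ T, F q = ∫⁻ x in S, ∫⁻ y in T, F (x,y) := by
  rw [Measure.volume_eq_prod, ← Measure.prod_restrict, lintegral_prod _ hF.aemeasurable]

lemma outer_term {K e : ℝ} (hK : 0 ≤ K) (he : -1 < e) :
    ∫⁻ x in Ioo (0:ℝ) 1, ENNReal.ofReal (K * x ^ e) < ⊤ := by
  calc ∫⁻ x in Ioo (0:ℝ) 1, ENNReal.ofReal (K * x^e)
      = ENNReal.ofReal K * ∫⁻ x in Ioo (0:ℝ) 1, ENNReal.ofReal (x^e) := by
        simp_rw [ENNReal.ofReal_mul hK]; exact lintegral_const_mul _ (meas1 e)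
    _ ≤ ENNReal.ofReal K * ∫⁻ x in Ioc (0:ℝ) 1, ENNReal.ofReal (x^e) :=
        mul_le_mul_right (lintegral_mono_set Ioo_subset_Ioc_self) _
    _ = ENNReal.ofReal K * ENNReal.ofReal (1^(e+1)/(e+1)) := by rw [lint_Ioc_rpow he one_pos]
    _ < ⊤ := ENNReal.mul_lt_top ENNReal.ofReal_lt_top ENNReal.ofReal_lt_top

lemma vol_sq : volume (Ioo (0:ℝ) 1 ×ˢ Ioo (0:ℝ) 1) = 1 := by
  rw [Measure.volume_eq_prod, Measure.prod_prod, Real.volume_Ioo]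
  simp

lemma suff {a b s : ℝ} (ha : 0 ≤ a) (hb : 0 ≤ b)
    (h1 : 3*s < a+2*b+3) (h2 : 3*s < 2*a+b+3) :
    (∫⁻ q in Ioo (0:ℝ) 1 ×ˢ Ioo (0:ℝ) 1,
      ENNReal.ofReal (q.1^a * q.2^b * (phi q.1 q.2)^(-s))) < ⊤ := by
  rcases le_or_gt s 0 with hs|hs
  · have hpt : ∀ q ∈ Ioo (0:ℝ) 1 ×ˢ Ioo (0:ℝ) 1,
        ENNReal.ofReal (q.1^a * q.2^b * (phi q.1 q.2)^(-s))
          ≤ ENNReal.ofReal ((3:ℝ)^(-s)) := by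
      rintro ⟨x,y⟩ ⟨⟨hx0,hx1⟩,⟨hy0,hy1⟩⟩
      apply ENNReal.ofReal_le_ofReal
      have hφ0 : 0 ≤ phi x y := by unfold phi; positivity
      have hφ3 : phi x y ≤ 3 := by
        have c1 : x*y ≤ 1 := by nlinarith
        have c2 : x^3 ≤ 1 := by nlinarith [pow_le_one₀ hx0.le hx1.le (n := 3)]
        have c3 : y^3 ≤ 1 := by nlinarith [pow_le_one₀ hy0.le hy1.le (n := 3)]
        unfold phi; linarith
      have e1 : x^a ≤ 1 := Real.rpow_le_one hx0.le hx1.le ha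
      have e2 : y^b ≤ 1 := Real.rpow_le_one hy0.le hy1.le hb
      have e3 : (phi x y)^(-s) ≤ (3:ℝ)^(-s) :=
        Real.rpow_le_rpow hφ0 hφ3 (neg_nonneg.mpr hs)
      calc x^a * y^b * (phi x y)^(-s) ≤ 1 * 1 * (3:ℝ)^(-s) := by
            apply mul_le_mul (mul_le_mul e1 e2 (Real.rpow_nonneg hy0.le _) one_pos.le) e3
              (Real.rpow_nonneg hφ0 _)
            norm_num
        _ = (3:ℝ)^(-s) := by ring
    calc (∫⁻ q in Ioo (0:ℝ) 1 ×ˢ Ioo (0:ℝ) 1,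
          ENNReal.ofReal (q.1^a * q.2^b * (phi q.1 q.2)^(-s)))
        ≤ ∫⁻ _ in Ioo (0:ℝ) 1 ×ˢ Ioo (0:ℝ) 1, ENNReal.ofReal ((3:ℝ)^(-s)) :=
          setLIntegral_mono measurable_const hpt
      _ = ENNReal.ofReal ((3:ℝ)^(-s)) * volume (Ioo (0:ℝ) 1 ×ˢ Ioo (0:ℝ) 1) :=
          setLIntegral_const _ _
      _ < ⊤ := by rw [vol_sq, mul_one]; exact ENNReal.ofReal_lt_top
  · rw [iter _ (measG a b s)]
    obtain ⟨K₁,K₂,K₃,K₄,e₁,e₂,e₃,e₄,hK₁,hK₂,hK₃,hK₄,he₁,he₂,he₃,he₄,hbd⟩ :=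
      inner_bound ha hb hs h1 h2
    have m1 : Measurable fun x : ℝ => ENNReal.ofReal (K₁ * x^e₁) :=
      ((measurable_id.pow_const e₁).const_mul K₁).ennreal_ofReal
    have m2 : Measurable fun x : ℝ => ENNReal.ofReal (K₂ * x^e₂) :=
      ((measurable_id.pow_const e₂).const_mul K₂).ennreal_ofReal
    have m3 : Measurable fun x : ℝ => ENNReal.ofReal (K₃ * x^e₃) :=
      ((measurable_id.pow_const e₃).const_mul K₃).ennreal_ofReal
    calc (∫⁻ x in Ioo (0:ℝ) 1, ∫⁻ y in Ioo (0:ℝ) 1,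
          ENNReal.ofReal ((x,y).1^a * (x,y).2^b * (phi (x,y).1 (x,y).2)^(-s)))
        ≤ ∫⁻ x in Ioo (0:ℝ) 1, (ENNReal.ofReal (K₁ * x^e₁) + ENNReal.ofReal (K₂*x^e₂)
            + ENNReal.ofReal (K₃*x^e₃) + ENNReal.ofReal (K₄*x^e₄)) := by
          apply setLIntegral_mono
          · exact ((m1.add m2).add m3).add ((measurable_id.pow_const e₄).const_mul K₄).ennreal_ofReal
          · exact hbd
      _ = (∫⁻ x in Ioo (0:ℝ) 1, ENNReal.ofReal (K₁ * x^e₁))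
          + (∫⁻ x in Ioo (0:ℝ) 1, ENNReal.ofReal (K₂ * x^e₂))
          + (∫⁻ x in Ioo (0:ℝ) 1, ENNReal.ofReal (K₃ * x^e₃))
          + (∫⁻ x in Ioo (0:ℝ) 1, ENNReal.ofReal (K₄ * x^e₄)) := by
          rw [lintegral_add_left (f := fun x : ℝ => ENNReal.ofReal (K₁ * x^e₁)
              + ENNReal.ofReal (K₂*x^e₂) + ENNReal.ofReal (K₃*x^e₃)) ((m1.add m2).add m3),
            lintegral_add_left (f := fun x : ℝ => ENNReal.ofReal (K₁ * x^e₁)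
              + ENNReal.ofReal (K₂*x^e₂)) (m1.add m2),
            lintegral_add_left m1]
      _ < ⊤ := by
          have t1 := outer_term hK₁ he₁
          have t2 := outer_term hK₂ he₂
          have t3 := outer_term hK₃ he₃
          have t4 := outer_term hK₄ he₄
          exact ENNReal.add_lt_top.mpr ⟨ENNReal.add_lt_top.mpr
            ⟨ENNReal.add_lt_top.mpr ⟨t1, t2⟩, t3⟩, t4⟩

lemma dvg {a b s : ℝ} (ha : 0 ≤ a) (hb : 0 ≤ b) (h1 : a+2*b+3 ≤ 3*s) :
    (∫⁻ q in Ioo (0:ℝ) 1 ×ˢ Ioo (0:ℝ) 1,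
      ENNReal.ofReal (q.1^a * q.2^b * (phi q.1 q.2)^(-s))) = ⊤ := by
  have hs : 0 < s := by linarith
  rw [iter _ (measG a b s), eq_top_iff]
  have hc0 : (0:ℝ) < (3:ℝ)^(-s)/(b+1) := by positivity
  calc (⊤:ℝ≥0∞) = ∫⁻ x in Ioo (0:ℝ) 1,
        ENNReal.ofReal ((3:ℝ)^(-s)/(b+1)) * ENNReal.ofReal (x ^ (a+2*b+2-3*s)) := by
        rw [lintegral_const_mul _ (meas1 _), lint_Ioo_rpow_top (by linarith : a+2*b+2-3*s ≤ -1),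
          ENNReal.mul_top (by simp [ENNReal.ofReal_eq_zero, not_le, hc0])]
    _ ≤ ∫⁻ x in Ioo (0:ℝ) 1, ∫⁻ y in Ioo (0:ℝ) 1,
        ENNReal.ofReal ((x,y).1^a * (x,y).2^b * (phi (x,y).1 (x,y).2)^(-s)) := by
        apply setLIntegral_mono
        · exact (measG a b s).lintegral_prod_right'
        intro x hx
        obtain ⟨hx0, hx1⟩ := hx
        have hsub : Ioc (0:ℝ) (x^2) ⊆ Ioo 0 1 := fun y hy =>
          ⟨hy.1, lt_of_le_of_lt hy.2 (by nlinarith)⟩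
        calc ENNReal.ofReal ((3:ℝ)^(-s)/(b+1)) * ENNReal.ofReal (x^(a+2*b+2-3*s))
            = ENNReal.ofReal ((3:ℝ)^(-s) * x^(a-3*s))
              * ENNReal.ofReal ((x^2)^(b+1)/(b+1)) := by
              rw [← ENNReal.ofReal_mul (by positivity), ← ENNReal.ofReal_mul (by positivity)]
              congr 1
              rw [pow_rpow x hx0.le 2 (b+1),
                show a+2*b+2-3*s = (a-3*s) + ((2:ℕ):ℝ)*(b+1) from by push_cast; ring,
                Real.rpow_add hx0]
              ring
          _ = ∫⁻ y in Ioc (0:ℝ) (x^2),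
              ENNReal.ofReal ((3:ℝ)^(-s) * x^(a-3*s)) * ENNReal.ofReal (y^b) := by
              rw [lintegral_const_mul _ (meas1 b),
                lint_Ioc_rpow (by linarith : (-1:ℝ) < b) (by positivity)]
          _ ≤ ∫⁻ y in Ioc (0:ℝ) (x^2), ENNReal.ofReal (x^a * y^b * (phi x y)^(-s)) := by
              apply setLIntegral_mono (measGy a b s x)
              intro y hy
              rw [← ENNReal.ofReal_mul (by positivity)]
              apply ENNReal.ofReal_le_ofReal
              have hy0 : 0 < y := hy.1
              have hφpos : 0 < phi x y := phi_pos hx0 hy0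
              have hφle : phi x y ≤ 3*x^3 := by
                have c1 : x*y ≤ x^3 := by nlinarith [hy.2, hx0]
                have c2 : y^3 ≤ x^6 := by
                  have := pow_le_pow_left₀ hy0.le hy.2 3
                  nlinarith [this]
                have c3 : x^6 ≤ x^3 := pow_le_pow_of_le_one hx0.le hx1.le (by norm_num)
                unfold phi; linarith
              have key : (3*x^3 : ℝ)^(-s) ≤ (phi x y)^(-s) :=
                rpow_neg_mono hφpos hφle hs.le
              have expand : (3*x^3:ℝ)^(-s) = (3:ℝ)^(-s) * x^(-(3*s)) := by
                rw [Real.mul_rpow (by norm_num) (by positivity), pow_rpow x hx0.le 3]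
                norm_num
              calc (3:ℝ)^(-s) * x^(a-3*s) * y^b
                  = (3:ℝ)^(-s) * (x^a * x^(-(3*s))) * y^b := by
                    rw [← Real.rpow_add hx0, show a + -(3*s) = a-3*s from by ring]
                _ = x^a * y^b * ((3:ℝ)^(-s) * x^(-(3*s))) := by ring
                _ ≤ x^a * y^b * (phi x y)^(-s) := by
                    rw [← expand]
                    exact mul_le_mul_of_nonneg_left key (by positivity)
          _ ≤ ∫⁻ y in Ioo (0:ℝ) 1, ENNReal.ofReal (x^a * y^b * (phi x y)^(-s)) :=
              lintegral_mono_set hsub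

lemma swapJ {a b s : ℝ} :
    (∫⁻ q in Ioo (0:ℝ) 1 ×ˢ Ioo (0:ℝ) 1,
      ENNReal.ofReal (q.1^a * q.2^b * (phi q.1 q.2)^(-s)))
    = (∫⁻ q in Ioo (0:ℝ) 1 ×ˢ Ioo (0:ℝ) 1,
      ENNReal.ofReal (q.1^b * q.2^a * (phi q.1 q.2)^(-s))) := by
  rw [Measure.volume_eq_prod, ← Measure.prod_restrict,
    ← lintegral_prod_swap (f := fun q : ℝ×ℝ => ENNReal.ofReal (q.1^a * q.2^b * (phi q.1 q.2)^(-s)))]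
  apply lintegral_congr
  intro q
  simp only [Prod.fst_swap, Prod.snd_swap]
  rw [phi_comm q.2 q.1]
  ring_nf

lemma core {a b s : ℝ} (ha : 0 ≤ a) (hb : 0 ≤ b) :
    (∫⁻ q in Ioo (0:ℝ) 1 ×ˢ Ioo (0:ℝ) 1,
      ENNReal.ofReal (q.1^a * q.2^b * (phi q.1 q.2)^(-s))) < ⊤
    ↔ (3*s < a+2*b+3 ∧ 3*s < 2*a+b+3) := by
  constructor
  · intro h
    constructor
    · by_contra hc
      push_neg at hc
      rw [dvg ha hb (by linarith)] at h
      exact absurd h (lt_irrefl ⊤)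
    · by_contra hc
      push_neg at hc
      rw [swapJ, dvg hb ha (by linarith)] at h
      exact absurd h (lt_irrefl ⊤)
  · rintro ⟨h1,h2⟩
    exact suff ha hb h1 h2




lemma near_alg {u v C' δ' κ : ℝ} (hu : 0 ≤ u) (hv : 0 ≤ v) (huδ : u ≤ δ') (hvδ : v ≤ δ')
    (hC' : 0 < C') (hκδ : 32*C'*δ' ≤ κ) :
    C' * (u^2*v + u*v^2 + (u+v)^4) ≤ (κ/2) * (u*v + u^3 + v^3) := by
  have hδ0 : 0 ≤ δ' := le_trans hu huδ
  have e1 : u^2*v + u*v^2 ≤ 2*δ'*(u*v) := by nlinarith [mul_nonneg hu hv]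
  have e2a : (u+v)^3 ≤ 4*(u^3+v^3) := by
    nlinarith [mul_nonneg (add_nonneg hu hv) (sq_nonneg (u-v))]
  have e2b : (u+v)^4 ≤ 2*δ'*(u+v)^3 := by
    have h4 : (u+v)^4 = (u+v)*(u+v)^3 := by ring
    rw [h4]
    exact mul_le_mul_of_nonneg_right (by linarith) (by positivity)
  have e2 : (u+v)^4 ≤ 8*δ'*(u^3+v^3) := by nlinarith [e2b, e2a, hδ0]
  have huv : 0 ≤ u*v := mul_nonneg hu hv
  have hcub : 0 ≤ u^3+v^3 := by positivity
  nlinarith [mul_le_mul_of_nonneg_left e1 hC'.le, mul_le_mul_of_nonneg_left e2 hC'.le,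
    mul_nonneg (mul_nonneg hC'.le hδ0) huv, mul_nonneg (mul_nonneg hC'.le hδ0) hcub,
    mul_le_mul_of_nonneg_right hκδ huv, mul_le_mul_of_nonneg_right hκδ hcub]

lemma compare (β γ : ℝ) (hβ : 0 < β) (hγ : 0 < γ) (ν μ : ℝ × ℝ → ℝ)
    (hνc : ContinuousOn ν (Icc (0:ℝ) 1 ×ˢ Icc (0:ℝ) 1))
    (hνO : ∃ C δ : ℝ, 0 < δ ∧ ∀ q ∈ Icc (0:ℝ) 1 ×ˢ Icc (0:ℝ) 1, ‖q‖ < δ →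
      |ν q| ≤ C * (q.1 ^ 2 * q.2 + q.1 * q.2 ^ 2 + (q.1 + q.2) ^ 4))
    (hμ : ∀ q : ℝ × ℝ, μ q = 4 * q.1 * q.2 + 2 * β * q.1 ^ 3 + 2 * γ * q.2 ^ 3 + ν q)
    (hpos : ∀ q ∈ (Icc (0:ℝ) 1 ×ˢ Icc (0:ℝ) 1) \ {((0:ℝ), (0:ℝ))}, 0 < μ q) :
    ∃ c₁ c₂ : ℝ, 0 < c₁ ∧ 0 < c₂ ∧ ∀ q ∈ Ioo (0:ℝ) 1 ×ˢ Ioo (0:ℝ) 1,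
      c₁ * phi q.1 q.2 ≤ μ q ∧ μ q ≤ c₂ * phi q.1 q.2 := by
  classical
  obtain ⟨C, δ, hδ, hC⟩ := hνO
  set C' : ℝ := max C 1 with hC'def
  have hC'0 : 0 < C' := lt_of_lt_of_le one_pos (le_max_right _ _)
  set κ : ℝ := min 4 (min (2*β) (2*γ)) with hκdef
  have hκ0 : 0 < κ := by
    apply lt_min (by norm_num); exact lt_min (by linarith) (by linarith)
  set δ' : ℝ := min δ (κ/(32*C')) with hδ'def
  have hδ'0 : 0 < δ' := lt_min hδ (by positivity)
  have hδ'δ : δ' ≤ δ := min_le_left _ _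
  have hδ'κ : 32*C'*δ' ≤ κ := by
    have h := min_le_right δ (κ/(32*C'))
    rw [← hδ'def] at h
    rw [show (32:ℝ)*C'*δ' = δ' * (32*C') from by ring]
    rw [le_div_iff₀ (by positivity)] at h
    exact h
  -- near bound for |ν|
  have hnu : ∀ q ∈ Icc (0:ℝ) 1 ×ˢ Icc (0:ℝ) 1, ‖q‖ < δ' →
      |ν q| ≤ (κ/2) * phi q.1 q.2 := by
    rintro ⟨u,v⟩ hq hnorm
    have hu : 0 ≤ u := hq.1.1
    have hv : 0 ≤ v := hq.2.1
    have huδ : u ≤ δ' := by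
      have := norm_fst_le ((u,v) : ℝ×ℝ)
      simp only [Real.norm_eq_abs] at this
      calc u ≤ |u| := le_abs_self u
        _ ≤ ‖((u,v):ℝ×ℝ)‖ := this
        _ ≤ δ' := hnorm.le
    have hvδ : v ≤ δ' := by
      have := norm_snd_le ((u,v) : ℝ×ℝ)
      simp only [Real.norm_eq_abs] at this
      calc v ≤ |v| := le_abs_self v
        _ ≤ ‖((u,v):ℝ×ℝ)‖ := this
        _ ≤ δ' := hnorm.le
    have hR : (0:ℝ) ≤ u^2*v + u*v^2 + (u+v)^4 := by positivity
    calc |ν (u,v)| ≤ C * (u^2*v + u*v^2 + (u+v)^4) :=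
          hC (u,v) hq (lt_of_lt_of_le hnorm hδ'δ)
      _ ≤ C' * (u^2*v + u*v^2 + (u+v)^4) :=
          mul_le_mul_of_nonneg_right (le_max_left _ _) hR
      _ ≤ (κ/2) * (u*v + u^3 + v^3) := near_alg hu hv huδ hvδ hC'0 hδ'κ
      _ = (κ/2) * phi u v := rfl
  -- far region
  set S : Set (ℝ×ℝ) := (Icc (0:ℝ) 1 ×ˢ Icc (0:ℝ) 1) ∩ {q : ℝ×ℝ | δ' ≤ ‖q‖} with hSdef
  have hScpt : IsCompact S :=
    ((isCompact_Icc.prod isCompact_Icc).inter_right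
      (isClosed_le continuous_const continuous_norm))
  have hSsub : S ⊆ Icc (0:ℝ) 1 ×ˢ Icc (0:ℝ) 1 := inter_subset_left
  have hμcont : ContinuousOn μ S := by
    have : μ = fun q : ℝ×ℝ => 4 * q.1 * q.2 + 2 * β * q.1 ^ 3 + 2 * γ * q.2 ^ 3 + ν q :=
      funext hμ
    rw [this]
    exact (((continuous_const.mul continuous_fst).mul continuous_snd).add
      ((continuous_const.mul (continuous_fst.pow 3))) |>.add
      (continuous_const.mul (continuous_snd.pow 3))).continuousOn.add (hνc.mono hSsub)
  have hφcont : ContinuousOn (fun q : ℝ×ℝ => phi q.1 q.2) S := by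
    unfold phi
    exact ((continuous_fst.mul continuous_snd).add (continuous_fst.pow 3)
      |>.add (continuous_snd.pow 3)).continuousOn
  have hSφpos : ∀ q ∈ S, 0 < phi q.1 q.2 := by
    rintro ⟨u,v⟩ hq
    have hu : 0 ≤ u := (hSsub hq).1.1
    have hv : 0 ≤ v := (hSsub hq).2.1
    have hnorm : δ' ≤ ‖((u,v):ℝ×ℝ)‖ := hq.2
    have : 0 < u ∨ 0 < v := by
      by_contra hcon
      push_neg at hcon
      have hu0 : u = 0 := le_antisymm hcon.1 hu
      have hv0 : v = 0 := le_antisymm hcon.2 hv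
      rw [hu0, hv0] at hnorm
      simp only [Prod.norm_def, norm_zero] at hnorm
      simp at hnorm
      linarith
    unfold phi
    rcases this with h|h
    · nlinarith [mul_nonneg hu hv, pow_pos h 3, pow_nonneg hv 3]
    · nlinarith [mul_nonneg hu hv, pow_pos h 3, pow_nonneg hu 3]
  have hSμpos : ∀ q ∈ S, 0 < μ q := by
    intro q hq
    apply hpos q
    refine ⟨hSsub hq, ?_⟩
    intro h0
    rw [mem_singleton_iff] at h0
    have := hq.2
    rw [h0] at this
    simp only [mem_setOf_eq] at this
    rw [show ((0,0) : ℝ×ℝ) = 0 from rfl, norm_zero] at this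
    linarith
  by_cases hne : S.Nonempty
  · obtain ⟨q₀, hq₀S, hq₀'⟩ := hScpt.exists_isMinOn hne hμcont
    obtain ⟨q₁, hq₁S, hq₁'⟩ := hScpt.exists_isMaxOn hne hφcont
    obtain ⟨q₂, hq₂S, hq₂'⟩ := hScpt.exists_isMinOn hne hφcont
    obtain ⟨q₃, hq₃S, hq₃'⟩ := hScpt.exists_isMaxOn hne hμcont
    have hq₀ := isMinOn_iff.mp hq₀'
    have hq₁ := isMaxOn_iff.mp hq₁'
    have hq₂ := isMinOn_iff.mp hq₂'
    have hq₃ := isMaxOn_iff.mp hq₃'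
    have hμmin : 0 < μ q₀ := hSμpos q₀ hq₀S
    have hφmax : 0 < phi q₁.1 q₁.2 := hSφpos q₁ hq₁S
    have hφmin : 0 < phi q₂.1 q₂.2 := hSφpos q₂ hq₂S
    refine ⟨min (κ/2) (μ q₀ / phi q₁.1 q₁.2),
      max (4+2*β+2*γ+κ/2) (μ q₃ / phi q₂.1 q₂.2), ?_, ?_, ?_⟩
    · apply lt_min (by positivity) (by positivity)
    · apply lt_of_lt_of_le (by positivity : (0:ℝ) < 4+2*β+2*γ+κ/2) (le_max_left _ _)
    · rintro ⟨u,v⟩ hq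
      have huI : u ∈ Icc (0:ℝ) 1 := ⟨hq.1.1.le, hq.1.2.le⟩
      have hvI : v ∈ Icc (0:ℝ) 1 := ⟨hq.2.1.le, hq.2.2.le⟩
      have hqI : ((u,v) : ℝ×ℝ) ∈ Icc (0:ℝ) 1 ×ˢ Icc (0:ℝ) 1 := ⟨huI, hvI⟩
      have hφpos : 0 < phi u v := by
        unfold phi; nlinarith [hq.1.1, hq.2.1, mul_pos hq.1.1 hq.2.1, pow_pos hq.1.1 3,
          pow_pos hq.2.1 3]
      have hφnn : 0 ≤ phi u v := hφpos.le
      rcases lt_or_ge ‖((u,v):ℝ×ℝ)‖ δ' with hcase|hcase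
      · -- near
        have hν := hnu (u,v) hqI hcase
        have habs := abs_le.mp hν
        have hμval := hμ (u,v)
        have hlow : (κ/2) * phi u v ≤ μ (u,v) := by
          rw [hμval]
          have h4 : κ ≤ 4 := min_le_left _ _
          have hb2 : κ ≤ 2*β := le_trans (min_le_right _ _) (min_le_left _ _)
          have hg2 : κ ≤ 2*γ := le_trans (min_le_right _ _) (min_le_right _ _)
          have hκφ : κ * phi u v ≤ 4*u*v + 2*β*u^3 + 2*γ*v^3 := by
            unfold phi
            nlinarith [mul_nonneg hq.1.1.le hq.2.1.le, pow_nonneg hq.1.1.le 3,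
              pow_nonneg hq.2.1.le 3, mul_le_mul_of_nonneg_right h4 (mul_nonneg hq.1.1.le hq.2.1.le),
              mul_le_mul_of_nonneg_right hb2 (pow_nonneg hq.1.1.le 3),
              mul_le_mul_of_nonneg_right hg2 (pow_nonneg hq.2.1.le 3)]
          simp only at habs ⊢
          nlinarith [habs.1, hκφ]
        have hhigh : μ (u,v) ≤ (4+2*β+2*γ+κ/2) * phi u v := by
          rw [hμval]
          have hup : 4*u*v + 2*β*u^3 + 2*γ*v^3 ≤ (4+2*β+2*γ) * phi u v := by
            unfold phi
            nlinarith [mul_nonneg hq.1.1.le hq.2.1.le, pow_nonneg hq.1.1.le 3,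
              pow_nonneg hq.2.1.le 3, hβ, hγ]
          simp only at habs ⊢
          nlinarith [habs.2, hup]
        constructor
        · calc min (κ/2) (μ q₀ / phi q₁.1 q₁.2) * phi u v
              ≤ (κ/2) * phi u v := mul_le_mul_of_nonneg_right (min_le_left _ _) hφnn
            _ ≤ μ (u,v) := hlow
        · calc μ (u,v) ≤ (4+2*β+2*γ+κ/2) * phi u v := hhigh
            _ ≤ max (4+2*β+2*γ+κ/2) (μ q₃ / phi q₂.1 q₂.2) * phi u v :=
                mul_le_mul_of_nonneg_right (le_max_left _ _) hφnn
      · -- far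
        have hqS : ((u,v):ℝ×ℝ) ∈ S := ⟨hqI, hcase⟩
        constructor
        · calc min (κ/2) (μ q₀ / phi q₁.1 q₁.2) * phi u v
              ≤ (μ q₀ / phi q₁.1 q₁.2) * phi u v :=
                mul_le_mul_of_nonneg_right (min_le_right _ _) hφnn
            _ ≤ (μ q₀ / phi q₁.1 q₁.2) * phi q₁.1 q₁.2 :=
                mul_le_mul_of_nonneg_left (hq₁ (u,v) hqS) (by positivity)
            _ = μ q₀ := div_mul_cancel₀ _ hφmax.ne'
            _ ≤ μ (u,v) := hq₀ (u,v) hqS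
        · calc μ (u,v) ≤ μ q₃ := hq₃ (u,v) hqS
            _ = (μ q₃ / phi q₂.1 q₂.2) * phi q₂.1 q₂.2 := (div_mul_cancel₀ _ hφmin.ne').symm
            _ ≤ (μ q₃ / phi q₂.1 q₂.2) * phi u v := by
                apply mul_le_mul_of_nonneg_left (hq₂ (u,v) hqS)
                have h3 : 0 < μ q₃ := hSμpos q₃ hq₃S
                exact le_of_lt (div_pos h3 hφmin)
            _ ≤ max (4+2*β+2*γ+κ/2) (μ q₃ / phi q₂.1 q₂.2) * phi u v :=
                mul_le_mul_of_nonneg_right (le_max_right _ _) hφnn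
  · -- S empty: every point of the open square is in the near regime
    refine ⟨κ/2, 4+2*β+2*γ+κ/2, by positivity, by positivity, ?_⟩
    rintro ⟨u,v⟩ hq
    have hqI : ((u,v) : ℝ×ℝ) ∈ Icc (0:ℝ) 1 ×ˢ Icc (0:ℝ) 1 :=
      ⟨⟨hq.1.1.le, hq.1.2.le⟩, ⟨hq.2.1.le, hq.2.2.le⟩⟩
    have hcase : ‖((u,v):ℝ×ℝ)‖ < δ' := by
      by_contra hcon
      push_neg at hcon
      exact hne ⟨(u,v), hqI, hcon⟩
    have hν := hnu (u,v) hqI hcase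
    have habs := abs_le.mp hν
    have hμval := hμ (u,v)
    have hφnn : 0 ≤ phi u v := by
      have h1 : 0 < u := hq.1.1
      have h2 : 0 < v := hq.2.1
      unfold phi; positivity
    constructor
    · rw [hμval]
      have h4 : κ ≤ 4 := min_le_left _ _
      have hb2 : κ ≤ 2*β := le_trans (min_le_right _ _) (min_le_left _ _)
      have hg2 : κ ≤ 2*γ := le_trans (min_le_right _ _) (min_le_right _ _)
      have hκφ : κ * phi u v ≤ 4*u*v + 2*β*u^3 + 2*γ*v^3 := by
        unfold phi
        nlinarith [mul_nonneg hq.1.1.le hq.2.1.le, pow_nonneg hq.1.1.le 3,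
          pow_nonneg hq.2.1.le 3, mul_le_mul_of_nonneg_right h4 (mul_nonneg hq.1.1.le hq.2.1.le),
          mul_le_mul_of_nonneg_right hb2 (pow_nonneg hq.1.1.le 3),
          mul_le_mul_of_nonneg_right hg2 (pow_nonneg hq.2.1.le 3)]
      simp only at habs ⊢
      nlinarith [habs.1, hκφ]
    · rw [hμval]
      have hup : 4*u*v + 2*β*u^3 + 2*γ*v^3 ≤ (4+2*β+2*γ) * phi u v := by
        unfold phi
        nlinarith [mul_nonneg hq.1.1.le hq.2.1.le, pow_nonneg hq.1.1.le 3,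
          pow_nonneg hq.2.1.le 3, hβ, hγ]
      simp only at habs ⊢
      nlinarith [habs.2, hup]

lemma setLIntegral_mono_on' {α : Type*} [MeasurableSpace α] {μ : Measure α} {s : Set α}
    (hs : MeasurableSet s) {f g : α → ℝ≥0∞} (h : ∀ x ∈ s, f x ≤ g x) :
    ∫⁻ x in s, f x ∂μ ≤ ∫⁻ x in s, g x ∂μ := by
  rw [← lintegral_indicator hs f, ← lintegral_indicator hs g]
  refine lintegral_mono fun x => ?_
  by_cases hx : x ∈ s
  · simpa [indicator_of_mem hx] using h x hx
  · simp [indicator_of_notMem hx]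

lemma sandwich {c₁ c₂ w v t : ℝ} (hc₁ : 0 < c₁) (hc₂ : 0 < c₂) (hv : 0 < v)
    (hl : c₁ * v ≤ w) (hr : w ≤ c₂ * v) :
    min (c₁^t) (c₂^t) * v^t ≤ w^t ∧ w^t ≤ max (c₁^t) (c₂^t) * v^t := by
  have hw : 0 < w := lt_of_lt_of_le (by positivity) hl
  have hvt : (0:ℝ) ≤ v^t := Real.rpow_nonneg hv.le t
  rcases le_or_gt 0 t with ht|ht
  · constructor
    · calc min (c₁^t) (c₂^t) * v^t ≤ c₁^t * v^t :=
          mul_le_mul_of_nonneg_right (min_le_left _ _) hvt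
        _ = (c₁*v)^t := (Real.mul_rpow hc₁.le hv.le).symm
        _ ≤ w^t := Real.rpow_le_rpow (by positivity) hl ht
    · calc w^t ≤ (c₂*v)^t := Real.rpow_le_rpow hw.le hr ht
        _ = c₂^t * v^t := Real.mul_rpow hc₂.le hv.le
        _ ≤ max (c₁^t) (c₂^t) * v^t := mul_le_mul_of_nonneg_right (le_max_right _ _) hvt
  · constructor
    · calc min (c₁^t) (c₂^t) * v^t ≤ c₂^t * v^t :=
          mul_le_mul_of_nonneg_right (min_le_right _ _) hvt
        _ = (c₂*v)^t := (Real.mul_rpow hc₂.le hv.le).symm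
        _ ≤ w^t := Real.rpow_le_rpow_of_nonpos hw hr ht.le
    · calc w^t ≤ (c₁*v)^t := Real.rpow_le_rpow_of_nonpos (by positivity) hl ht.le
        _ = c₁^t * v^t := Real.mul_rpow hc₁.le hv.le
        _ ≤ max (c₁^t) (c₂^t) * v^t := mul_le_mul_of_nonneg_right (le_max_left _ _) hvt

/-- Lemma int: for `M(u,v) = u^m v^n / μ(u,v)^ℓ` on `Σ* = [0,1]² \ {(0,0)}`, where
`μ = 4uv + 2βu³ + 2γv³ + ν` with `β, γ > 0`, `ν = O(u²v + uv² + (u+v)⁴)` near the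
origin, `ν` continuous and `μ > 0` on `Σ*`, one has
`∫_Σ |M|^p μ < ∞  ↔  m + n + min{m,n} > 3ℓ − 6/p`. -/
theorem stmt10 (β γ : ℝ) (hβ : 0 < β) (hγ : 0 < γ) (ν μ : ℝ × ℝ → ℝ)
    (hνc : ContinuousOn ν (Icc (0:ℝ) 1 ×ˢ Icc (0:ℝ) 1))
    (hνO : ∃ C δ : ℝ, 0 < δ ∧ ∀ q ∈ Icc (0:ℝ) 1 ×ˢ Icc (0:ℝ) 1, ‖q‖ < δ →
      |ν q| ≤ C * (q.1 ^ 2 * q.2 + q.1 * q.2 ^ 2 + (q.1 + q.2) ^ 4))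
    (hμ : ∀ q : ℝ × ℝ, μ q = 4 * q.1 * q.2 + 2 * β * q.1 ^ 3 + 2 * γ * q.2 ^ 3 + ν q)
    (hpos : ∀ q ∈ (Icc (0:ℝ) 1 ×ˢ Icc (0:ℝ) 1) \ {((0:ℝ), (0:ℝ))}, 0 < μ q)
    (m n ℓ : ℕ) (p : ℝ) (hp : 1 ≤ p) :
    (∫⁻ q in Icc (0:ℝ) 1 ×ˢ Icc (0:ℝ) 1,
        ENNReal.ofReal (|q.1 ^ m * q.2 ^ n / μ q ^ ℓ| ^ p * μ q)) < ⊤ ↔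
      (m : ℝ) + n + min m n > 3 * ℓ - 6 / p := by
  obtain ⟨c₁, c₂, hc₁, hc₂, hcomp⟩ := compare β γ hβ hγ ν μ hνc hνO hμ hpos
  have hp0 : 0 < p := lt_of_lt_of_le one_pos hp
  -- reduce to the open square
  have hae : (Icc (0:ℝ) 1 ×ˢ Icc (0:ℝ) 1 : Set (ℝ×ℝ))
      =ᵐ[volume] (Ioo (0:ℝ) 1 ×ˢ Ioo (0:ℝ) 1 : Set (ℝ×ℝ)) := by
    have hedge : volume (Icc (0:ℝ) 1 \ Ioo 0 1) = 0 := by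
      have hsub : Icc (0:ℝ) 1 \ Ioo 0 1 ⊆ {0, 1} := by
        intro x hx
        rcases eq_or_lt_of_le hx.1.1 with h|h
        · exact Or.inl h.symm
        rcases eq_or_lt_of_le hx.1.2 with h'|h'
        · exact Or.inr h'
        · exact absurd ⟨h, h'⟩ hx.2
      exact measure_mono_null hsub
        (((Set.finite_singleton (1:ℝ)).insert 0).measure_zero volume)
    have h1 : volume (((Icc (0:ℝ) 1 \ Ioo 0 1) ×ˢ Icc (0:ℝ) 1 : Set (ℝ×ℝ))) = 0 := by
      rw [Measure.volume_eq_prod, Measure.prod_prod, hedge, zero_mul]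
    have h2 : volume ((Icc (0:ℝ) 1 ×ˢ (Icc (0:ℝ) 1 \ Ioo 0 1) : Set (ℝ×ℝ))) = 0 := by
      rw [Measure.volume_eq_prod, Measure.prod_prod, hedge, mul_zero]
    rw [Filter.eventuallyEq_set]
    rw [ae_iff]
    refine measure_mono_null (t := ((Icc (0:ℝ) 1 \ Ioo 0 1) ×ˢ Icc (0:ℝ) 1 : Set (ℝ×ℝ))
      ∪ (Icc (0:ℝ) 1 ×ˢ (Icc (0:ℝ) 1 \ Ioo 0 1) : Set (ℝ×ℝ))) ?_ ?_
    · rintro ⟨x,y⟩ hq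
      simp only [mem_setOf_eq, mem_prod, not_iff] at hq
      by_cases hI : ((x,y) : ℝ×ℝ) ∈ (Icc (0:ℝ) 1 ×ˢ Icc (0:ℝ) 1 : Set (ℝ×ℝ))
      · have hno : ¬ (((x,y) : ℝ×ℝ) ∈ (Ioo (0:ℝ) 1 ×ˢ Ioo (0:ℝ) 1 : Set (ℝ×ℝ))) := by
          intro hcon
          have := hq.mpr
          simp only [mem_prod] at hcon hI
          tauto
        simp only [mem_prod, not_and_or] at hno
        rcases hno with h|h
        · exact Or.inl ⟨⟨hI.1, h⟩, hI.2⟩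
        · exact Or.inr ⟨hI.1, hI.2, h⟩
      · exfalso
        have : ((x,y) : ℝ×ℝ) ∈ (Ioo (0:ℝ) 1 ×ˢ Ioo (0:ℝ) 1 : Set (ℝ×ℝ)) := by
          by_contra hcon
          simp only [mem_prod] at hq hI hcon
          tauto
        simp only [mem_prod] at this hI
        exact hI ⟨Ioo_subset_Icc_self this.1, Ioo_subset_Icc_self this.2⟩
    · exact measure_union_null h1 h2
  rw [setLIntegral_congr hae]
  have hsqm : MeasurableSet (Ioo (0:ℝ) 1 ×ˢ Ioo (0:ℝ) 1 : Set (ℝ×ℝ)) :=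
    measurableSet_Ioo.prod measurableSet_Ioo
  -- squeeze constants
  set s : ℝ := (ℓ:ℝ)*p - 1 with hsdef
  set d₁ : ℝ := min (c₁^(-s)) (c₂^(-s)) with hd₁def
  set d₂ : ℝ := max (c₁^(-s)) (c₂^(-s)) with hd₂def
  have hd₁ : 0 < d₁ := lt_min (Real.rpow_pos_of_pos hc₁ _) (Real.rpow_pos_of_pos hc₂ _)
  have hd₂ : 0 < d₂ := lt_of_lt_of_le (Real.rpow_pos_of_pos hc₁ _) (le_max_left _ _)
  -- pointwise comparisons
  have hpt : ∀ q ∈ (Ioo (0:ℝ) 1 ×ˢ Ioo (0:ℝ) 1 : Set (ℝ×ℝ)),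
      d₁ * (q.1^((m:ℝ)*p) * q.2^((n:ℝ)*p) * (phi q.1 q.2)^(-s))
        ≤ |q.1 ^ m * q.2 ^ n / μ q ^ ℓ| ^ p * μ q ∧
      |q.1 ^ m * q.2 ^ n / μ q ^ ℓ| ^ p * μ q
        ≤ d₂ * (q.1^((m:ℝ)*p) * q.2^((n:ℝ)*p) * (phi q.1 q.2)^(-s)) := by
    rintro ⟨x,y⟩ hq
    have hx0 : 0 < x := hq.1.1
    have hy0 : 0 < y := hq.2.1
    have hφ : 0 < phi x y := phi_pos hx0 hy0
    obtain ⟨hwl, hwr⟩ := hcomp (x,y) hq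
    have hw : 0 < μ (x,y) := lt_of_lt_of_le (by positivity) hwl
    have hE : |x ^ m * y ^ n / μ (x,y) ^ ℓ| ^ p * μ (x,y)
        = (x^((m:ℝ)*p) * y^((n:ℝ)*p)) * (μ (x,y))^(-s) := by
      have hnum : (0:ℝ) ≤ x ^ m * y ^ n := by positivity
      have hden : (0:ℝ) < μ (x,y) ^ ℓ := pow_pos hw ℓ
      rw [abs_of_nonneg (by positivity)]
      rw [Real.div_rpow hnum hden.le, Real.mul_rpow (pow_nonneg hx0.le m) (pow_nonneg hy0.le n),
        pow_rpow x hx0.le m p, pow_rpow y hy0.le n p, pow_rpow (μ (x,y)) hw.le ℓ p]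
      rw [div_mul_eq_mul_div, mul_div_assoc]
      congr 1
      rw [show -s = 1 - (ℓ:ℝ)*p from by rw [hsdef]; ring, Real.rpow_sub hw, Real.rpow_one]
    obtain ⟨hsl, hsr⟩ := sandwich (t := -s) hc₁ hc₂ hφ hwl hwr
    constructor
    · rw [hE]
      calc d₁ * (x^((m:ℝ)*p) * y^((n:ℝ)*p) * (phi x y)^(-s))
          = (x^((m:ℝ)*p) * y^((n:ℝ)*p)) * (min (c₁^(-s)) (c₂^(-s)) * (phi x y)^(-s)) := by
            rw [← hd₁def]; ring
        _ ≤ (x^((m:ℝ)*p) * y^((n:ℝ)*p)) * (μ (x,y))^(-s) := by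
            apply mul_le_mul_of_nonneg_left hsl
            positivity
    · rw [hE]
      calc (x^((m:ℝ)*p) * y^((n:ℝ)*p)) * (μ (x,y))^(-s)
          ≤ (x^((m:ℝ)*p) * y^((n:ℝ)*p)) * (max (c₁^(-s)) (c₂^(-s)) * (phi x y)^(-s)) := by
            apply mul_le_mul_of_nonneg_left hsr
            positivity
        _ = d₂ * (x^((m:ℝ)*p) * y^((n:ℝ)*p) * (phi x y)^(-s)) := by
            rw [← hd₂def]; ring
  have key : (∫⁻ q in Ioo (0:ℝ) 1 ×ˢ Ioo (0:ℝ) 1,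
      ENNReal.ofReal (|q.1 ^ m * q.2 ^ n / μ q ^ ℓ| ^ p * μ q)) < ⊤ ↔
      (∫⁻ q in Ioo (0:ℝ) 1 ×ˢ Ioo (0:ℝ) 1,
      ENNReal.ofReal (q.1^((m:ℝ)*p) * q.2^((n:ℝ)*p) * (phi q.1 q.2)^(-s))) < ⊤ := by
    constructor
    · intro h
      have hle : (∫⁻ q in Ioo (0:ℝ) 1 ×ˢ Ioo (0:ℝ) 1,
          ENNReal.ofReal (q.1^((m:ℝ)*p) * q.2^((n:ℝ)*p) * (phi q.1 q.2)^(-s)))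
          ≤ ENNReal.ofReal d₁⁻¹ * ∫⁻ q in Ioo (0:ℝ) 1 ×ˢ Ioo (0:ℝ) 1,
            ENNReal.ofReal (|q.1 ^ m * q.2 ^ n / μ q ^ ℓ| ^ p * μ q) := by
        calc (∫⁻ q in Ioo (0:ℝ) 1 ×ˢ Ioo (0:ℝ) 1,
            ENNReal.ofReal (q.1^((m:ℝ)*p) * q.2^((n:ℝ)*p) * (phi q.1 q.2)^(-s)))
            ≤ ∫⁻ q in Ioo (0:ℝ) 1 ×ˢ Ioo (0:ℝ) 1,
              ENNReal.ofReal (d₁⁻¹ * (|q.1 ^ m * q.2 ^ n / μ q ^ ℓ| ^ p * μ q)) := by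
              apply setLIntegral_mono_on' hsqm
              intro q hq
              apply ENNReal.ofReal_le_ofReal
              have h1 := (hpt q hq).1
              calc q.1^((m:ℝ)*p) * q.2^((n:ℝ)*p) * (phi q.1 q.2)^(-s)
                  = d₁⁻¹ * (d₁ * (q.1^((m:ℝ)*p) * q.2^((n:ℝ)*p) * (phi q.1 q.2)^(-s))) := by
                    field_simp
                _ ≤ d₁⁻¹ * (|q.1 ^ m * q.2 ^ n / μ q ^ ℓ| ^ p * μ q) :=
                    mul_le_mul_of_nonneg_left h1 (by positivity)
          _ = ENNReal.ofReal d₁⁻¹ * ∫⁻ q in Ioo (0:ℝ) 1 ×ˢ Ioo (0:ℝ) 1,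
              ENNReal.ofReal (|q.1 ^ m * q.2 ^ n / μ q ^ ℓ| ^ p * μ q) := by
              simp_rw [ENNReal.ofReal_mul (by positivity : (0:ℝ) ≤ d₁⁻¹)]
              exact lintegral_const_mul' _ _ ENNReal.ofReal_ne_top
      exact lt_of_le_of_lt hle (ENNReal.mul_lt_top ENNReal.ofReal_lt_top h)
    · intro h
      have hle : (∫⁻ q in Ioo (0:ℝ) 1 ×ˢ Ioo (0:ℝ) 1,
          ENNReal.ofReal (|q.1 ^ m * q.2 ^ n / μ q ^ ℓ| ^ p * μ q))
          ≤ ENNReal.ofReal d₂ * ∫⁻ q in Ioo (0:ℝ) 1 ×ˢ Ioo (0:ℝ) 1,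
            ENNReal.ofReal (q.1^((m:ℝ)*p) * q.2^((n:ℝ)*p) * (phi q.1 q.2)^(-s)) := by
        calc (∫⁻ q in Ioo (0:ℝ) 1 ×ˢ Ioo (0:ℝ) 1,
            ENNReal.ofReal (|q.1 ^ m * q.2 ^ n / μ q ^ ℓ| ^ p * μ q))
            ≤ ∫⁻ q in Ioo (0:ℝ) 1 ×ˢ Ioo (0:ℝ) 1,
              ENNReal.ofReal (d₂ * (q.1^((m:ℝ)*p) * q.2^((n:ℝ)*p) * (phi q.1 q.2)^(-s))) := by
              apply setLIntegral_mono_on' hsqm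
              intro q hq
              exact ENNReal.ofReal_le_ofReal (hpt q hq).2
          _ = ENNReal.ofReal d₂ * ∫⁻ q in Ioo (0:ℝ) 1 ×ˢ Ioo (0:ℝ) 1,
              ENNReal.ofReal (q.1^((m:ℝ)*p) * q.2^((n:ℝ)*p) * (phi q.1 q.2)^(-s)) := by
              simp_rw [ENNReal.ofReal_mul hd₂.le]
              exact lintegral_const_mul' _ _ ENNReal.ofReal_ne_top
      exact lt_of_le_of_lt hle (ENNReal.mul_lt_top ENNReal.ofReal_lt_top h)
  rw [key, core (by positivity) (by positivity)]
  have hiff1 : 3*s < (m:ℝ)*p+2*((n:ℝ)*p)+3 ↔ 3*(ℓ:ℝ) - 6/p < (m:ℝ)+2*n := by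
    rw [hsdef]
    constructor
    · intro h
      have h' : (3*(ℓ:ℝ) - 6/p) * p < ((m:ℝ)+2*n) * p := by
        have e : (3*(ℓ:ℝ) - 6/p) * p = 3*ℓ*p - 6 := by field_simp
        rw [e]; nlinarith [h]
      exact lt_of_mul_lt_mul_right h' hp0.le
    · intro h
      have h' := mul_lt_mul_of_pos_right h hp0
      have e : (3*(ℓ:ℝ) - 6/p) * p = 3*ℓ*p - 6 := by field_simp
      rw [e] at h'
      nlinarith [h']
  have hiff2 : 3*s < 2*((m:ℝ)*p)+(n:ℝ)*p+3 ↔ 3*(ℓ:ℝ) - 6/p < 2*(m:ℝ)+n := by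
    rw [hsdef]
    constructor
    · intro h
      have h' : (3*(ℓ:ℝ) - 6/p) * p < (2*(m:ℝ)+n) * p := by
        have e : (3*(ℓ:ℝ) - 6/p) * p = 3*ℓ*p - 6 := by field_simp
        rw [e]; nlinarith [h]
      exact lt_of_mul_lt_mul_right h' hp0.le
    · intro h
      have h' := mul_lt_mul_of_pos_right h hp0
      have e : (3*(ℓ:ℝ) - 6/p) * p = 3*ℓ*p - 6 := by field_simp
      rw [e] at h'
      nlinarith [h']
  rw [gt_iff_lt, Nat.cast_min, hiff1, hiff2]
  rcases le_total (m:ℝ) (n:ℝ) with hmn|hmn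
  · rw [min_eq_left hmn]
    constructor
    · rintro ⟨hA,hB⟩; linarith
    · intro h; exact ⟨by linarith, by linarith⟩
  · rw [min_eq_right hmn]
    constructor
    · rintro ⟨hA,hB⟩; linarith
    · intro h; exact ⟨by linarith, by linarith⟩
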